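/- There is a universal constant C > 0 such that for every Schwartz function θ : ℝ² → ℝ and every h ∈ ℝ², ‖θ(·−h) − θ‖²_{L⁴(ℝ²)} ≤ C |h|^{1/2} ‖θ‖_{L^∞(ℝ²)} ( (2π)^{−2} ∫_{ℝ²} |ξ| |θ̂(ξ)|² dξ )^{1/2}. -/

import Mathlib

open MeasureTheory Filter Topology Real Set
open scoped RealInnerProductSpace
noncomputable section

/-- The plane, with its Euclidean structure. -/
abbrev E2 : Type := EuclideanSpace ℝ (Fin 2)

/-- Partial derivative `∂ᵢ g` at `x`. -/
def pd (i : Fin 2) (g : E2 → ℝ) (x : E2) : ℝ := fderiv ℝ g x (EuclideanSpace.single i 1)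

/-- Laplacian `Δ g` at `x`. -/
def lap (g : E2 → ℝ) (x : E2) : ℝ := ∑ i : Fin 2, pd i (pd i g) x

/-- Perpendicular gradient `∇^⊥ψ = (−∂₂ψ, ∂₁ψ)`. -/
def gradPerp (ψ : E2 → ℝ) (x : E2) : Fin 2 → ℝ := ![-(pd 1 ψ x), pd 0 ψ x]

/-- The Fourier transform `ĝ(ξ) = ∫ e^{−i x·ξ} g(x) dx` of `g : ℝ² → ℝ`. -/
def ft (g : E2 → ℝ) (ξ : E2) : ℂ :=
  ∫ x : E2, Complex.exp (-Complex.I * ((⟪x, ξ⟫ : ℝ) : ℂ)) * (g x : ℂ)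

/-- `L` is the half-Laplacian `Λ = (−Δ)^{1/2}` of `g`, defined on the Fourier side by
`Λg(x) = (2π)^{−2} ∫ e^{i x·ξ} |ξ| ĝ(ξ) dξ`. -/
def IsFourierHalfLap (g L : E2 → ℝ) : Prop :=
  ∀ x : E2, (L x : ℂ)
    = ((((2 * π)^2)⁻¹ : ℝ) : ℂ)
        * ∫ ξ : E2, Complex.exp (Complex.I * ((⟪x, ξ⟫ : ℝ) : ℂ)) * (‖ξ‖ : ℂ) * ft g ξ
open scoped FourierTransform ComplexConjugate

/-- chord bound -/
lemma chord_sq (t : ℝ) : ‖Complex.exp ((t : ℂ) * Complex.I) - 1‖ ^ 2 ≤ 4 * |t| := by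
  have habs : ‖Complex.exp ((t : ℂ) * Complex.I)‖ = 1 := by
    simpa using Complex.abs_exp_ofReal_mul_I t
  rcases le_or_gt |t| 1 with ht | ht
  · have h1 : ‖Complex.exp ((t : ℂ) * Complex.I) - 1‖ ≤ 2 * |t| := by
      have h2 : ‖(t : ℂ) * Complex.I‖ ≤ 1 := by simpa using ht
      simpa using Complex.norm_exp_sub_one_le h2
    have h0 : (0:ℝ) ≤ ‖Complex.exp ((t : ℂ) * Complex.I) - 1‖ := norm_nonneg _
    calc ‖Complex.exp ((t : ℂ) * Complex.I) - 1‖ ^ 2 ≤ (2 * |t|) ^ 2 := by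
          exact pow_le_pow_left₀ h0 h1 2
      _ = 4 * (|t| * |t|) := by ring
      _ ≤ 4 * (1 * |t|) := by nlinarith [abs_nonneg t]
      _ = 4 * |t| := by ring
  · have h1 : ‖Complex.exp ((t : ℂ) * Complex.I) - 1‖ ≤ 2 := by
      calc ‖Complex.exp ((t : ℂ) * Complex.I) - 1‖ ≤ ‖Complex.exp ((t : ℂ) * Complex.I)‖ + ‖(1:ℂ)‖ :=
            norm_sub_le _ _
        _ = 2 := by rw [habs]; norm_num
    calc ‖Complex.exp ((t : ℂ) * Complex.I) - 1‖ ^ 2 ≤ 2 ^ 2 := by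
          exact pow_le_pow_left₀ (norm_nonneg _) h1 2
      _ = 4 * 1 := by norm_num
      _ ≤ 4 * |t| := by nlinarith

/-- A real Schwartz function, viewed as a complex-valued Schwartz function. -/
def toC (θ : SchwartzMap E2 ℝ) : SchwartzMap E2 ℂ where
  toFun x := (θ x : ℂ)
  smooth' := Complex.ofRealCLM.contDiff.comp (θ.smooth ⊤)
  decay' := by
    intro k n
    obtain ⟨C, hC⟩ := θ.decay k n
    refine ⟨C, fun x => ?_⟩
    have : ‖iteratedFDeriv ℝ n (fun y : E2 => ((θ y : ℂ))) x‖
        = ‖iteratedFDeriv ℝ n (⇑θ) x‖ := by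
      have := (Complex.ofRealLI).norm_iteratedFDeriv_comp_left (θ.smooth ⊤).contDiffAt (x := x) (i := n) (by exact_mod_cast le_top)
      exact this
    rw [this]
    exact hC.2 x

@[simp] lemma toC_apply (θ : SchwartzMap E2 ℝ) (x : E2) : toC θ x = (θ x : ℂ) := rfl

lemma conj_fourier (u : E2 → ℂ) (ξ : E2) :
    𝓕 (fun x => conj (u x)) ξ = conj (𝓕⁻ u ξ) := by
  rw [Real.fourier_eq', Real.fourierInv_eq', ← integral_conj]
  congr 1
  ext v
  simp only [smul_eq_mul, map_mul, ← Complex.exp_conj]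
  congr 1
  rw [Complex.conj_ofReal, Complex.conj_I]
  push_cast
  ring

lemma innerL_flip : (innerₗ E2).flip = innerₗ E2 := by
  apply LinearMap.ext; intro x; apply LinearMap.ext; intro y
  simpa using real_inner_comm y x

lemma plancherel {f : E2 → ℂ} (hc : Continuous f) (hf : Integrable f)
    (hFf : Integrable (𝓕 f)) :
    ∫ ξ : E2, ‖𝓕 f ξ‖ ^ 2 = ∫ x : E2, ‖f x‖ ^ 2 := by
  have hg : Integrable (fun ξ : E2 => conj (𝓕 f ξ)) := by
    have := hFf.norm
    refine (integrable_norm_iff ?_).1 (by simpa using this)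
    exact (Complex.continuous_conj.comp (VectorFourier.fourierIntegral_continuous
      Real.continuous_fourierChar continuous_inner hf)).aestronglyMeasurable
  have key := VectorFourier.integral_fourierIntegral_smul_eq_flip
    (L := innerₗ E2) (f := f) (g := fun ξ : E2 => conj (𝓕 f ξ))
    Real.continuous_fourierChar continuous_inner hf hg
  rw [innerL_flip] at key
  have hGg : ∀ x : E2, VectorFourier.fourierIntegral Real.fourierChar volume (innerₗ E2)
      (fun ξ : E2 => conj (𝓕 f ξ)) x = conj (f x) := by
    intro x
    have h1 : VectorFourier.fourierIntegral Real.fourierChar volume (innerₗ E2)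
        (fun ξ : E2 => conj (𝓕 f ξ)) x = 𝓕 (fun ξ : E2 => conj (𝓕 f ξ)) x := rfl
    rw [h1, conj_fourier, hc.fourierInv_fourier_eq hf hFf]
  have key2 : ∫ ξ : E2, (‖𝓕 f ξ‖ ^ 2 : ℂ) = ∫ x : E2, (‖f x‖ ^ 2 : ℂ) := by
    have e1 : ∀ z : ℂ, z • conj z = ((‖z‖ ^ 2 : ℝ) : ℂ) := by
      intro z
      rw [smul_eq_mul, Complex.mul_conj, Complex.normSq_eq_norm_sq]
    calc ∫ ξ : E2, (‖𝓕 f ξ‖ ^ 2 : ℂ)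
        = ∫ ξ : E2, (𝓕 f ξ) • conj (𝓕 f ξ) := by
          congr 1; ext ξ; rw [e1]; push_cast; ring
      _ = ∫ x : E2, f x • VectorFourier.fourierIntegral Real.fourierChar volume (innerₗ E2)
            (fun ξ : E2 => conj (𝓕 f ξ)) x := key
      _ = ∫ x : E2, (‖f x‖ ^ 2 : ℂ) := by
          congr 1; ext x; rw [hGg x, e1]; push_cast; ring
  have cast_int : ∀ g : E2 → ℝ, ∫ x : E2, ((g x : ℝ) : ℂ) = ((∫ x : E2, g x : ℝ) : ℂ) :=
    fun g => integral_ofReal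
  have key3 : ∫ ξ : E2, ((‖𝓕 f ξ‖ ^ 2 : ℝ) : ℂ) = ∫ x : E2, ((‖f x‖ ^ 2 : ℝ) : ℂ) := by
    push_cast
    exact key2
  rw [cast_int, cast_int] at key3
  exact_mod_cast key3

lemma fourier_translate (f : E2 → ℂ) (h : E2) (ξ : E2) :
    𝓕 (fun x => f (x - h)) ξ = ((Real.fourierChar (⟪-h, ξ⟫ : ℝ) : Circle) : ℂ) * 𝓕 f ξ := by
  have key := VectorFourier.fourierIntegral_comp_add_right Real.fourierChar
    (volume : Measure E2) (innerₗ E2) f (-h)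
  have h2 : (f ∘ fun v => v + (-h)) = fun x => f (x - h) := by
    ext x; simp [sub_eq_add_neg]
  rw [h2] at key
  have := congrFun key ξ
  rw [show VectorFourier.fourierIntegral Real.fourierChar volume (innerₗ E2)
      (fun x => f (x - h)) ξ = 𝓕 (fun x => f (x - h)) ξ from rfl] at this
  rw [this, Circle.smul_def]
  rfl

lemma fourier_sub (f : E2 → ℂ) (hf : Integrable f) (h ξ : E2) :
    𝓕 (fun x => f (x - h) - f x) ξ
      = (((Real.fourierChar (⟪-h, ξ⟫ : ℝ) : Circle) : ℂ) - 1) * 𝓕 f ξ := by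
  have h1 : Integrable (fun x => f (x - h)) := hf.comp_sub_right h
  rw [Real.fourier_eq]
  have hsplit : ∀ v : E2, (Real.fourierChar (-(⟪v, ξ⟫ : ℝ)) : Circle) • (f (v - h) - f v)
      = (Real.fourierChar (-(⟪v, ξ⟫ : ℝ)) : Circle) • f (v - h)
        - (Real.fourierChar (-(⟪v, ξ⟫ : ℝ)) : Circle) • f v := fun v => smul_sub _ _ _
  rw [integral_congr_ae (Filter.Eventually.of_forall hsplit)]
  rw [integral_sub ((Real.fourierIntegral_convergent_iff ξ).2 h1)
      ((Real.fourierIntegral_convergent_iff ξ).2 hf)]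
  rw [← Real.fourier_eq, ← Real.fourier_eq, fourier_translate]
  ring

lemma scale_integral (F : E2 → ℝ) :
    ∫ ξ : E2, F ((2 * π)⁻¹ • ξ) = (2 * π) ^ 2 * ∫ η : E2, F η := by
  have key := MeasureTheory.Measure.integral_comp_inv_smul (volume : Measure E2) F (2 * π)
  rw [key, finrank_euclideanSpace_fin, abs_of_pos (by positivity), smul_eq_mul]

lemma ft_eq (θ : SchwartzMap E2 ℝ) (ξ : E2) :
    ft (⇑θ) ξ = 𝓕 (fun x => (θ x : ℂ)) ((2 * π)⁻¹ • ξ) := by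
  rw [Real.fourier_eq']
  unfold ft
  congr 1
  ext v
  rw [smul_eq_mul]
  congr 1
  rw [real_inner_smul_right]
  have h2 : (-2 * π * ((2 * π)⁻¹ * (⟪v, ξ⟫ : ℝ))) = -(⟪v, ξ⟫ : ℝ) := by
    have : (2 * π) ≠ 0 := by positivity
    field_simp
  rw [h2]
  push_cast
  ring

/-- The `L⁴` interpolation bound for increments: there is a universal `C > 0` with
`‖θ(·−h) − θ‖²_{L⁴} ≤ C |h|^{1/2} ‖θ‖_{L^∞} ((2π)^{−2}∫ |ξ||θ̂(ξ)|²dξ)^{1/2}`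
for every Schwartz `θ` and every `h ∈ ℝ²`. -/
theorem stmt12 :
    ∃ C : ℝ, 0 < C ∧
      ∀ (θ : SchwartzMap E2 ℝ) (h : E2),
        Real.sqrt (∫ x : E2, (θ (x - h) - θ x)^4)
          ≤ C * Real.sqrt ‖h‖ * (⨆ x : E2, |θ x|)
              * Real.sqrt (((2 * π)^2)⁻¹ * ∫ ξ : E2, ‖ξ‖ * ‖ft (⇑θ) ξ‖^2) := by

  refine ⟨4, by norm_num, fun θ h => ?_⟩
  set fc : E2 → ℂ := fun x => (θ x : ℂ) with hfc
  have hfc_eq : fc = ⇑(toC θ) := rfl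
  have hcont : Continuous fc := Complex.continuous_ofReal.comp θ.continuous
  have hfi : Integrable fc := by rw [hfc_eq]; exact (toC θ).integrable
  set G := SchwartzMap.fourierTransformCLM ℂ (toC θ) with hGdef
  have hFeq : 𝓕 fc = ⇑G := by
    rw [hfc_eq]; rfl
  have hFi : Integrable (𝓕 fc) := by rw [hFeq]; exact G.integrable
  -- the quantity X
  set X := ∫ η : E2, ‖η‖ * ‖𝓕 fc η‖ ^ 2 with hXdef
  have hX0 : 0 ≤ X := integral_nonneg (fun η => by positivity)
  have hXint : Integrable (fun η : E2 => ‖η‖ * ‖𝓕 fc η‖ ^ 2) := by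
    rw [hFeq]
    obtain ⟨C0, hC0pos, hC0⟩ := G.decay 0 0
    have hb : ∀ η, ‖G η‖ ≤ C0 := fun η => by simpa using hC0 η
    refine ((G.integrable_pow_mul volume 1).const_mul C0).mono' ?_ (ae_of_all _ fun η => ?_)
    · exact (continuous_norm.mul ((G.continuous.norm).pow 2)).aestronglyMeasurable
    · have h1 : ‖η‖ * ‖G η‖ ^ 2 ≤ C0 * (‖η‖ ^ 1 * ‖G η‖) := by
        have h2 : ‖η‖ * ‖G η‖ * ‖G η‖ ≤ ‖η‖ * ‖G η‖ * C0 :=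
          mul_le_mul_of_nonneg_left (hb η) (mul_nonneg (norm_nonneg _) (norm_nonneg _))
        calc ‖η‖ * ‖G η‖ ^ 2 = ‖η‖ * ‖G η‖ * ‖G η‖ := by ring
          _ ≤ ‖η‖ * ‖G η‖ * C0 := h2
          _ = C0 * (‖η‖ ^ 1 * ‖G η‖) := by ring
      calc ‖‖η‖ * ‖G η‖ ^ 2‖ = ‖η‖ * ‖G η‖ ^ 2 := by
            rw [Real.norm_eq_abs, abs_of_nonneg (by positivity)]
        _ ≤ C0 * (‖η‖ ^ 1 * ‖G η‖) := h1
  -- the sup M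
  set M := ⨆ x : E2, |θ x| with hMdef
  obtain ⟨C1, hC1pos, hC1⟩ := θ.decay 0 0
  have hbd : ∀ x, |θ x| ≤ C1 := fun x => by simpa using hC1 x
  have hBdd : BddAbove (Set.range fun x : E2 => |θ x|) :=
    ⟨C1, by rintro y ⟨x, rfl⟩; exact hbd x⟩
  have hMle : ∀ x, |θ x| ≤ M := fun x => le_ciSup hBdd x
  have hM0 : 0 ≤ M := le_trans (abs_nonneg _) (hMle 0)
  -- the increment
  set q : E2 → ℝ := fun x => θ (x - h) - θ x with hqdef
  have hq_cont : Continuous q :=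
    (θ.continuous.comp (continuous_id.sub continuous_const)).sub θ.continuous
  have hq_int : Integrable q := (θ.integrable.comp_sub_right h).sub θ.integrable
  set φ : E2 → ℂ := fun x => fc (x - h) - fc x with hφdef
  have hφ_cont : Continuous φ :=
    (hcont.comp (continuous_id.sub continuous_const)).sub hcont
  have hφ_int : Integrable φ := (hfi.comp_sub_right h).sub hfi
  have hφq : ∀ x, ‖φ x‖ = |q x| := by
    intro x
    simp only [hφdef, hqdef, hfc]
    rw [← Complex.ofReal_sub]
    rw [Complex.norm_real, Real.norm_eq_abs]
  have hqM : ∀ x, |q x| ≤ 2 * M := by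
    intro x
    calc |q x| ≤ |θ (x - h)| + |θ x| := abs_sub _ _
      _ ≤ M + M := add_le_add (hMle _) (hMle _)
      _ = 2 * M := by ring
  -- Fourier transform of φ
  have hFφ : ∀ ξ, 𝓕 φ ξ
      = (((Real.fourierChar (⟪-h, ξ⟫ : ℝ) : Circle) : ℂ) - 1) * 𝓕 fc ξ :=
    fourier_sub fc hfi h
  have hFφ_cont : Continuous (𝓕 φ) :=
    VectorFourier.fourierIntegral_continuous Real.continuous_fourierChar continuous_inner hφ_int
  have hcircnorm : ∀ t : ℝ, ‖((Real.fourierChar t : Circle) : ℂ)‖ = 1 := by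
    intro t
    exact Circle.norm_coe _
  have hFφi : Integrable (𝓕 φ) := by
    refine (hFi.norm.const_mul 2).mono' hFφ_cont.aestronglyMeasurable
      (ae_of_all _ fun ξ => ?_)
    rw [hFφ ξ, norm_mul]
    have h1 : ‖((Real.fourierChar (⟪-h, ξ⟫ : ℝ) : Circle) : ℂ) - 1‖ ≤ 2 := by
      calc ‖((Real.fourierChar (⟪-h, ξ⟫ : ℝ) : Circle) : ℂ) - 1‖
          ≤ ‖((Real.fourierChar (⟪-h, ξ⟫ : ℝ) : Circle) : ℂ)‖ + ‖(1:ℂ)‖ := norm_sub_le _ _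
        _ = 2 := by rw [hcircnorm]; norm_num
    exact mul_le_mul_of_nonneg_right h1 (norm_nonneg _)
  -- chord estimate
  have hchord : ∀ ξ : E2, ‖((Real.fourierChar (⟪-h, ξ⟫ : ℝ) : Circle) : ℂ) - 1‖ ^ 2
      ≤ 8 * π * (‖h‖ * ‖ξ‖) := by
    intro ξ
    rw [Real.fourierChar_apply]
    have h1 : ‖Complex.exp (((2 * π * ⟪-h, ξ⟫ : ℝ) : ℂ) * Complex.I) - 1‖ ^ 2
        ≤ 4 * |2 * π * ⟪-h, ξ⟫| := chord_sq _
    have h2 : |2 * π * (⟪-h, ξ⟫ : ℝ)| = 2 * π * |(⟪-h, ξ⟫ : ℝ)| := by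
      rw [abs_mul, abs_mul, abs_two, abs_of_pos pi_pos]
    have h3 : |(⟪-h, ξ⟫ : ℝ)| ≤ ‖h‖ * ‖ξ‖ := by
      have := abs_real_inner_le_norm (-h : E2) ξ
      rwa [norm_neg] at this
    calc ‖Complex.exp (((2 * π * ⟪-h, ξ⟫ : ℝ) : ℂ) * Complex.I) - 1‖ ^ 2
        ≤ 4 * (2 * π * |(⟪-h, ξ⟫ : ℝ)|) := by rw [← h2]; exact h1
      _ = 8 * π * |(⟪-h, ξ⟫ : ℝ)| := by ring
      _ ≤ 8 * π * (‖h‖ * ‖ξ‖) := by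
          exact mul_le_mul_of_nonneg_left h3 (by positivity)
  -- the L² bound
  have hL2 : ∫ x : E2, ‖φ x‖ ^ 2 ≤ 8 * π * ‖h‖ * X := by
    rw [← plancherel hφ_cont hφ_int hFφi]
    have hpt : ∀ ξ : E2, ‖𝓕 φ ξ‖ ^ 2 ≤ 8 * π * ‖h‖ * (‖ξ‖ * ‖𝓕 fc ξ‖ ^ 2) := by
      intro ξ
      rw [hFφ ξ, norm_mul, mul_pow]
      calc ‖((Real.fourierChar (⟪-h, ξ⟫ : ℝ) : Circle) : ℂ) - 1‖ ^ 2 * ‖𝓕 fc ξ‖ ^ 2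
          ≤ 8 * π * (‖h‖ * ‖ξ‖) * ‖𝓕 fc ξ‖ ^ 2 :=
            mul_le_mul_of_nonneg_right (hchord ξ) (by positivity)
        _ = 8 * π * ‖h‖ * (‖ξ‖ * ‖𝓕 fc ξ‖ ^ 2) := by ring
    calc ∫ ξ : E2, ‖𝓕 φ ξ‖ ^ 2
        ≤ ∫ ξ : E2, 8 * π * ‖h‖ * (‖ξ‖ * ‖𝓕 fc ξ‖ ^ 2) :=
          integral_mono_of_nonneg (ae_of_all _ fun ξ => sq_nonneg _)
            (hXint.const_mul _) (ae_of_all _ hpt)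
      _ = 8 * π * ‖h‖ * X := by rw [integral_const_mul]
  -- integrability of powers of q
  have hq2_int : Integrable (fun x : E2 => q x ^ 2) := by
    refine (hq_int.norm.const_mul (2 * M)).mono'
      ((hq_cont.pow 2).aestronglyMeasurable) (ae_of_all _ fun x => ?_)
    rw [Real.norm_eq_abs, abs_pow, sq, Real.norm_eq_abs]
    exact mul_le_mul_of_nonneg_right (hqM x) (abs_nonneg _)
  have hq4_int : Integrable (fun x : E2 => q x ^ 4) := by
    refine (hq_int.norm.const_mul ((2 * M) ^ 3)).mono'
      ((hq_cont.pow 4).aestronglyMeasurable) (ae_of_all _ fun x => ?_)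
    rw [Real.norm_eq_abs, abs_pow, Real.norm_eq_abs]
    calc |q x| ^ 4 = |q x| ^ 3 * |q x| := by ring
      _ ≤ (2 * M) ^ 3 * |q x| :=
          mul_le_mul_of_nonneg_right (pow_le_pow_left₀ (abs_nonneg _) (hqM x) 3) (abs_nonneg _)
  have hq2eq : ∫ x : E2, q x ^ 2 = ∫ x : E2, ‖φ x‖ ^ 2 := by
    refine integral_congr_ae (ae_of_all _ fun x => ?_)
    show q x ^ 2 = ‖φ x‖ ^ 2
    rw [hφq x, sq_abs]
  have h44 : ∫ x : E2, q x ^ 4 ≤ (2 * M) ^ 2 * ∫ x : E2, q x ^ 2 := by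
    rw [← integral_const_mul]
    refine integral_mono hq4_int (hq2_int.const_mul _) fun x => ?_
    have h2 : q x ^ 2 ≤ (2 * M) ^ 2 := by
      nlinarith [sq_abs (q x), hqM x, abs_nonneg (q x)]
    calc q x ^ 4 = q x ^ 2 * q x ^ 2 := by ring
      _ ≤ (2 * M) ^ 2 * q x ^ 2 := mul_le_mul_of_nonneg_right h2 (sq_nonneg _)
  have hfinal : ∫ x : E2, q x ^ 4 ≤ 32 * π * M ^ 2 * ‖h‖ * X := by
    calc ∫ x : E2, q x ^ 4 ≤ (2 * M) ^ 2 * ∫ x : E2, q x ^ 2 := h44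
      _ = (2 * M) ^ 2 * ∫ x : E2, ‖φ x‖ ^ 2 := by rw [hq2eq]
      _ ≤ (2 * M) ^ 2 * (8 * π * ‖h‖ * X) :=
          mul_le_mul_of_nonneg_left hL2 (by positivity)
      _ = 32 * π * M ^ 2 * ‖h‖ * X := by ring
  -- identify the right-hand side quantity
  have h2π : (2 * π) ≠ 0 := by positivity
  have hftX : ((2 * π) ^ 2)⁻¹ * ∫ ξ : E2, ‖ξ‖ * ‖ft (⇑θ) ξ‖ ^ 2 = 2 * π * X := by
    set Fb : E2 → ℝ := fun η => ‖(2 * π) • η‖ * ‖𝓕 fc η‖ ^ 2 with hFbdef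
    have hFb : ∀ ξ : E2, ‖ξ‖ * ‖ft (⇑θ) ξ‖ ^ 2 = Fb ((2 * π)⁻¹ • ξ) := by
      intro ξ
      rw [hFbdef]
      show ‖ξ‖ * ‖ft (⇑θ) ξ‖ ^ 2 = ‖(2 * π) • ((2 * π)⁻¹ • ξ)‖ * ‖𝓕 fc ((2 * π)⁻¹ • ξ)‖ ^ 2
      rw [smul_smul, mul_inv_cancel₀ h2π, one_smul, ft_eq]
    have hnorm : ∀ η : E2, Fb η = 2 * π * (‖η‖ * ‖𝓕 fc η‖ ^ 2) := by
      intro η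
      show ‖(2 * π) • η‖ * ‖𝓕 fc η‖ ^ 2 = 2 * π * (‖η‖ * ‖𝓕 fc η‖ ^ 2)
      rw [norm_smul, Real.norm_eq_abs, abs_of_pos (by positivity)]
      ring
    calc ((2 * π) ^ 2)⁻¹ * ∫ ξ : E2, ‖ξ‖ * ‖ft (⇑θ) ξ‖ ^ 2
        = ((2 * π) ^ 2)⁻¹ * ∫ ξ : E2, Fb ((2 * π)⁻¹ • ξ) := by
          congr 1
          exact integral_congr_ae (ae_of_all _ hFb)
      _ = ((2 * π) ^ 2)⁻¹ * ((2 * π) ^ 2 * ∫ η : E2, Fb η) := by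
          rw [scale_integral]
      _ = ∫ η : E2, Fb η := by
          rw [← mul_assoc, inv_mul_cancel₀ (by positivity), one_mul]
      _ = ∫ η : E2, 2 * π * (‖η‖ * ‖𝓕 fc η‖ ^ 2) :=
          integral_congr_ae (ae_of_all _ hnorm)
      _ = 2 * π * X := by rw [integral_const_mul]
  rw [hftX]
  calc Real.sqrt (∫ x : E2, q x ^ 4)
      ≤ Real.sqrt (32 * π * M ^ 2 * ‖h‖ * X) := Real.sqrt_le_sqrt hfinal
    _ = 4 * Real.sqrt ‖h‖ * M * Real.sqrt (2 * π * X) := by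
        rw [show 32 * π * M ^ 2 * ‖h‖ * X = (4 * Real.sqrt ‖h‖ * M) ^ 2 * (2 * π * X) by
          rw [mul_pow, mul_pow, sq_sqrt (norm_nonneg h)]; ring]
        rw [Real.sqrt_mul (by positivity), Real.sqrt_sq (by positivity)]
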